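/- Tail sum bound: for μ > 1, let C_μ = e^{(μ-1)/μ}/(μ-1). Then for any integers k ≥ 1 and m ≥ 1, ∑_{i=m}^∞ 1/(kμ+i)^{k(μ-1)+1} ≤ (C_μ/k) · 1/(kμ+m)^{k(μ-1)}. -/

import Mathlib

open Real Filter Topology

/-- Per-term bound: `1/x^{p+1} ≤ ((x-1)^{-p} - x^{-p})/p` for `p > 0`, `x > 1`. -/
lemma tail_step_aux {p x : ℝ} (hp : 0 < p) (hx : 1 < x) :
    1 / x ^ (p + 1) ≤ ((x - 1) ^ (-p) - x ^ (-p)) / p := by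
  have hx0 : (0:ℝ) < x := by linarith
  have hx1 : (0:ℝ) < x - 1 := by linarith
  have hxp : 0 < x ^ p := Real.rpow_pos_of_pos hx0 p
  have hx1p : 0 < (x - 1) ^ p := Real.rpow_pos_of_pos hx1 p
  -- key : (x-1)^p * (1 + p/x) ≤ x^p
  have key : (x - 1) ^ p * (1 + p / x) ≤ x ^ p := by
    have e1 : x - 1 ≤ x * Real.exp (-(1 / x)) := by
      have := Real.add_one_le_exp (-(1 / x))
      have h2 : x * (-(1/x) + 1) ≤ x * Real.exp (-(1/x)) :=
        mul_le_mul_of_nonneg_left this hx0.le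
      have h3 : x * (-(1/x) + 1) = x - 1 := by field_simp; ring
      linarith
    have e2 : (x - 1) ^ p ≤ (x * Real.exp (-(1 / x))) ^ p :=
      Real.rpow_le_rpow hx1.le e1 hp.le
    have e3 : (x * Real.exp (-(1 / x))) ^ p = x ^ p * Real.exp (-(p / x)) := by
      rw [Real.mul_rpow hx0.le (Real.exp_pos _).le, ← Real.exp_mul]
      ring_nf
    have e4 : 1 + p / x ≤ Real.exp (p / x) := by
      have := Real.add_one_le_exp (p / x); linarith
    have e5 : (x - 1) ^ p * (1 + p / x) ≤ x ^ p * Real.exp (-(p / x)) * Real.exp (p / x) := by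
      apply mul_le_mul (e3 ▸ e2) e4 (by positivity) (by positivity)
    calc (x - 1) ^ p * (1 + p / x) ≤ x ^ p * Real.exp (-(p / x)) * Real.exp (p / x) := e5
      _ = x ^ p := by rw [mul_assoc, ← Real.exp_add]; simp
  -- convert to inverse form: x^{-p} * (1 + p/x) ≤ (x-1)^{-p}
  have key' : x ^ (-p) * (1 + p / x) ≤ (x - 1) ^ (-p) := by
    rw [Real.rpow_neg hx0.le, Real.rpow_neg hx1.le, inv_eq_one_div, inv_eq_one_div,
      div_mul_eq_mul_div, div_le_div_iff₀ hxp hx1p]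
    nlinarith
  rw [le_div_iff₀ hp]
  have hxp1 : x ^ (p + 1) = x ^ p * x := by
    rw [Real.rpow_add hx0, Real.rpow_one]
  have h6 : 1 / x ^ (p + 1) * p = x ^ (-p) * (p / x) := by
    rw [hxp1, Real.rpow_neg hx0.le]
    field_simp
  rw [h6]
  nlinarith [key']

/-- Tail sum bound: for `μ > 1` and `C_μ = e^{(μ-1)/μ}/(μ-1)`, for any integers `k ≥ 1`
and `m ≥ 1`, `∑_{i=m}^∞ 1/(kμ+i)^{k(μ-1)+1} ≤ (C_μ/k) · 1/(kμ+m)^{k(μ-1)}`. -/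
theorem tail_sum_bound (μ : ℝ) (hμ : 1 < μ) (Cμ : ℝ)
    (hCμ : Cμ = Real.exp ((μ - 1) / μ) / (μ - 1)) :
    ∀ k m : ℕ, 1 ≤ k → 1 ≤ m →
      ∑' j : ℕ, 1 / ((k : ℝ) * μ + ((m : ℝ) + j)) ^ ((k : ℝ) * (μ - 1) + 1)
        ≤ (Cμ / k) * (1 / ((k : ℝ) * μ + m) ^ ((k : ℝ) * (μ - 1))) := by
  intro k m hk hm
  have hK : (1:ℝ) ≤ (k:ℝ) := by exact_mod_cast hk
  have hM : (1:ℝ) ≤ (m:ℝ) := by exact_mod_cast hm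
  set K : ℝ := (k:ℝ) with hKdef
  set a : ℝ := K * μ + m with hadef
  set p : ℝ := K * (μ - 1) with hpdef
  have hKμ : μ ≤ K * μ := le_mul_of_one_le_left (by linarith) hK
  have ha2 : 2 < a := by simp only [hadef]; nlinarith
  have hp : 0 < p := by simp only [hpdef]; nlinarith
  have ha1 : 1 < a - 1 := by linarith
  -- telescoping sequence
  set b : ℕ → ℝ := fun j => (a - 1 + j) ^ (-p) / p with hbdef
  have hbase : ∀ j : ℕ, (1:ℝ) < a - 1 + j := fun j => by
    have : (0:ℝ) ≤ (j:ℝ) := Nat.cast_nonneg j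
    linarith
  have hstep : ∀ j : ℕ, 1 / (a + j) ^ (p + 1) ≤ b j - b (j + 1) := by
    intro j
    have h := tail_step_aux hp (show (1:ℝ) < a + j by have := hbase j; linarith)
    have e1 : a + (j:ℝ) - 1 = a - 1 + j := by ring
    have e2 : a - 1 + ((j:ℕ)+1 : ℕ) = a + j := by push_cast; ring
    simp only [hbdef, e2]
    calc 1 / (a + j) ^ (p + 1) ≤ ((a + j - 1) ^ (-p) - (a + j) ^ (-p)) / p := h
      _ = (a - 1 + j) ^ (-p) / p - (a + j) ^ (-p) / p := by rw [e1]; ring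
  have hb0 : Tendsto b atTop (𝓝 0) := by
    have h1 : Tendsto (fun j : ℕ => a - 1 + (j:ℝ)) atTop atTop :=
      tendsto_atTop_add_const_left _ _ tendsto_natCast_atTop_atTop
    have h2 : Tendsto (fun j : ℕ => (a - 1 + (j:ℝ)) ^ (-p)) atTop (𝓝 0) :=
      (tendsto_rpow_neg_atTop hp).comp h1
    have := h2.div_const p
    simpa using this
  have hbnonneg : ∀ j, 0 ≤ b j - b (j + 1) := fun j => by
    have := hstep j
    have : 0 < 1 / (a + j) ^ (p + 1) := by
      have : (0:ℝ) < a + j := by have := hbase j; linarith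
      positivity
    linarith [hstep j]
  have htel : HasSum (fun j => b j - b (j + 1)) (b 0) := by
    rw [hasSum_iff_tendsto_nat_of_nonneg hbnonneg]
    have : ∀ n : ℕ, ∑ i ∈ Finset.range n, (b i - b (i + 1)) = b 0 - b n :=
      fun n => Finset.sum_range_sub' b n
    simp only [this]
    simpa using tendsto_const_nhds.sub hb0
  -- the actual summand
  have hfeq : ∀ j : ℕ, 1 / (K * μ + ((m:ℝ) + j)) ^ (K * (μ - 1) + 1)
      = 1 / (a + j) ^ (p + 1) := fun j => by
    simp only [hadef, hpdef]; ring_nf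
  have hfnonneg : ∀ j : ℕ, 0 ≤ 1 / (a + j) ^ (p + 1) := fun j => by
    have : (0:ℝ) < a + j := by have := hbase j; linarith
    positivity
  have hsummable : Summable (fun j : ℕ => 1 / (a + j) ^ (p + 1)) :=
    Summable.of_nonneg_of_le hfnonneg hstep htel.summable
  have hsum_le : ∑' j : ℕ, 1 / (a + j) ^ (p + 1) ≤ b 0 := by
    rw [← htel.tsum_eq]
    exact Summable.tsum_le_tsum hstep hsummable htel.summable
  -- final algebraic bound: b 0 = (a-1)^{-p}/p ≤ (Cμ/K) * a^{-p}
  set c : ℝ := (μ - 1) / μ with hcdef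
  have hlog : Real.log a - Real.log (a - 1) ≤ 1 / (a - 1) := by
    have h1 : Real.log (a / (a - 1)) ≤ a / (a - 1) - 1 :=
      Real.log_le_sub_one_of_pos (by positivity)
    have h2 : Real.log (a / (a - 1)) = Real.log a - Real.log (a - 1) :=
      Real.log_div (by linarith) (by linarith)
    have h3 : a / (a - 1) - 1 = 1 / (a - 1) := by field_simp; ring
    linarith [h2 ▸ h1, h3 ▸ h1]
  have hpc : p * (1 / (a - 1)) ≤ c := by
    rw [hcdef, hpdef, mul_one_div, div_le_div_iff₀ (by linarith) (by linarith)]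
    have haK : K * μ ≤ a - 1 := by simp only [hadef]; linarith
    nlinarith
  have hmain : (a - 1) ^ (-p) ≤ Real.exp c * a ^ (-p) := by
    rw [Real.rpow_def_of_pos (by linarith : (0:ℝ) < a - 1),
        Real.rpow_def_of_pos (by linarith : (0:ℝ) < a), ← Real.exp_add, Real.exp_le_exp]
    have : p * (Real.log a - Real.log (a - 1)) ≤ p * (1 / (a - 1)) :=
      mul_le_mul_of_nonneg_left hlog hp.le
    nlinarith
  have hb0eq : b 0 = (a - 1) ^ (-p) / p := by simp [hbdef]
  have hCK : Cμ / K = Real.exp c / p := by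
    rw [hCμ, hpdef, hcdef, div_div, mul_comm]
  have hfinal : b 0 ≤ (Cμ / K) * (1 / a ^ p) := by
    rw [hb0eq, hCK]
    have h1 : 1 / a ^ p = a ^ (-p) := by
      rw [Real.rpow_neg (by linarith : (0:ℝ) ≤ a), one_div]
    rw [h1]
    have h2 : Real.exp c / p * a ^ (-p) = (Real.exp c * a ^ (-p)) / p := by ring
    rw [h2]
    gcongr
  calc ∑' j : ℕ, 1 / (K * μ + ((m:ℝ) + j)) ^ (K * (μ - 1) + 1)
      = ∑' j : ℕ, 1 / (a + j) ^ (p + 1) := by simp only [hfeq]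
    _ ≤ b 0 := hsum_le
    _ ≤ (Cμ / K) * (1 / a ^ p) := hfinal
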